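/- arXiv:2204.08302 — 2 statements merged into one kernel-verified Lean document; each statement's English description precedes it below -/
import Mathlib

section
/- Let F be an infinite field and let n be a positive integer. Then the center of the special upper triangular group STP(n,F) coincides with the center of the special linear group SL(n,F) (i.e., it consists exactly of the scalar matrices λ·I_n with λ^n = 1), and moreover the quotient group STP(n,F)/Z(STP(n,F)) has trivial center. -/
noncomputable section

open Matrix

/-- The special upper triangular group `STP(n, F)`: the subgroup of the special linear
group `SL(n, F)` consisting of upper triangular matrices. -/
def STP (n : ℕ) (F : Type*) [Field F] : Subgroup (Matrix.SpecialLinearGroup (Fin n) F) where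
  carrier := { A | (A : Matrix (Fin n) (Fin n) F).BlockTriangular id }
  one_mem' := by
    simpa only [Set.mem_setOf_eq, Matrix.SpecialLinearGroup.coe_one] using
      Matrix.blockTriangular_one
  mul_mem' := by
    intro a b ha hb
    simpa only [Set.mem_setOf_eq, Matrix.SpecialLinearGroup.coe_mul] using ha.mul hb
  inv_mem' := by
    intro a ha
    simp only [Set.mem_setOf_eq] at ha ⊢
    have hdet : IsUnit (a : Matrix (Fin n) (Fin n) F).det := by
      rw [a.prop]; exact isUnit_one
    haveI := Matrix.invertibleOfIsUnitDet _ hdet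
    have h1 : (↑(a⁻¹) : Matrix (Fin n) (Fin n) F) = (↑a : Matrix (Fin n) (Fin n) F)⁻¹ := by
      rw [Matrix.SpecialLinearGroup.coe_inv, Matrix.inv_def, a.prop, Ring.inverse_one, one_smul]
    rw [h1]
    exact Matrix.blockTriangular_inv_of_blockTriangular ha

/-- The product (pointwise) topology on `n × n` matrices over a topological field. -/
def matrixTop (n : ℕ) (F : Type*) (t : TopologicalSpace F) :
    TopologicalSpace (Matrix (Fin n) (Fin n) F) :=
  @Pi.topologicalSpace _ _ fun _ => @Pi.topologicalSpace _ _ fun _ => t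

/-- The pointwise topology on `SL(n, F)`, induced from `F ^ (n²)`. -/
def SLtop (n : ℕ) (F : Type*) [Field F] (t : TopologicalSpace F) :
    TopologicalSpace (Matrix.SpecialLinearGroup (Fin n) F) :=
  (matrixTop n F t).induced ((↑) : Matrix.SpecialLinearGroup (Fin n) F → Matrix (Fin n) (Fin n) F)

/-- The subspace topology on `STP(n, F) ⊆ SL(n, F)`. -/
def STPtop (n : ℕ) (F : Type*) [Field F] (t : TopologicalSpace F) :
    TopologicalSpace (STP n F) :=
  (SLtop n F t).induced ((↑) : STP n F → Matrix.SpecialLinearGroup (Fin n) F)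

/-- A Hausdorff topological group `(G, t)` is (topologically) minimal if `G` admits no
strictly coarser Hausdorff group topology. -/
def IsMinimalTopGroup (G : Type*) [Group G] (t : TopologicalSpace G) : Prop :=
  @IsTopologicalGroup G t _ ∧ @T2Space G t ∧
    ∀ t' : TopologicalSpace G, t ≤ t' → @IsTopologicalGroup G t' _ → @T2Space G t' → t' = t

/-- A Hausdorff topological group `(G, t)` is totally minimal if every continuous surjective
group homomorphism onto a Hausdorff topological group is open. -/
def IsTotallyMinimalTopGroup (G : Type*) [Group G] (t : TopologicalSpace G) : Prop :=
  @IsTopologicalGroup G t _ ∧ @T2Space G t ∧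
    ∀ (H : Type*) (_ : Group H) (tH : TopologicalSpace H),
      @IsTopologicalGroup H tH _ → @T2Space H tH → ∀ f : G →* H,
        @Continuous _ _ t tH f → Function.Surjective f → @IsOpenMap _ _ t tH f

/-- A minimal topological group `(G, t)` is perfectly minimal if its product with any
minimal topological group is minimal. -/
def IsPerfectlyMinimalTopGroup (G : Type*) [Group G] (t : TopologicalSpace G) : Prop :=
  IsMinimalTopGroup G t ∧
    ∀ (H : Type*) (_ : Group H) (tH : TopologicalSpace H), IsMinimalTopGroup H tH →
      IsMinimalTopGroup (G × H) (@instTopologicalSpaceProd _ _ t tH)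

/-- The Gaussian rational field `ℚ(i)`: the subfield of `ℂ` generated by `i`. -/
def QI : Subfield ℂ := Subfield.closure {Complex.I}

/-- `ρ m = e^{2πi/m}`, a primitive `m`-th root of unity in `ℂ`. -/
def rho (m : ℕ) : ℂ := Complex.exp (2 * Real.pi * Complex.I / m)

/-- The `p`-adic topology on `ℚ`: the topology induced from `ℚ_p`. -/
def padicTopology (p : ℕ) (hp : p.Prime) : TopologicalSpace ℚ :=
  haveI : Fact p.Prime := ⟨hp⟩
  TopologicalSpace.induced ((↑) : ℚ → ℚ_[p]) inferInstance

namespace STPaux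

open Matrix

variable {n : ℕ} {F : Type*} [Field F]

/-- The underlying matrix of an element of `STP n F`. -/
def mat (A : ↥(STP n F)) : Matrix (Fin n) (Fin n) F :=
  ((A : Matrix.SpecialLinearGroup (Fin n) F) : Matrix (Fin n) (Fin n) F)

lemma mat_inj : Function.Injective (mat (n := n) (F := F)) :=
  fun _ _ h => Subtype.ext (Subtype.ext h)

lemma mat_mul (A B : ↥(STP n F)) : mat (A * B) = mat A * mat B := rfl

lemma mat_one : mat (1 : ↥(STP n F)) = 1 := rfl

lemma mat_tri (A : ↥(STP n F)) : (mat A).BlockTriangular id := A.2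

lemma mat_det (A : ↥(STP n F)) : (mat A).det = 1 :=
  (A : Matrix.SpecialLinearGroup (Fin n) F).2

lemma diag_mul {X Y : Matrix (Fin n) (Fin n) F} (hX : X.BlockTriangular id)
    (hY : Y.BlockTriangular id) (i : Fin n) : (X * Y) i i = X i i * Y i i := by
  rw [Matrix.mul_apply, Finset.sum_eq_single i]
  · intro k _ hk
    rcases lt_or_gt_of_ne hk with h | h
    · rw [hX (show (id : Fin n → Fin n) k < id i from h), zero_mul]
    · rw [hY (show (id : Fin n → Fin n) i < id k from h), mul_zero]
  · intro h; exact absurd (Finset.mem_univ i) h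

lemma mat_diag_inv (A : ↥(STP n F)) (i : Fin n) : mat A i i * mat A⁻¹ i i = 1 := by
  have h : mat (A * A⁻¹) = 1 := by rw [mul_inv_cancel, mat_one]
  rw [mat_mul] at h
  have h2 := diag_mul (mat_tri A) (mat_tri A⁻¹) i
  rw [h] at h2
  simp only [Matrix.one_apply_eq] at h2
  exact h2.symm

lemma central_scalar [Infinite F] (hn : 0 < n) (A : ↥(STP n F))
    (h : ∀ B : ↥(STP n F), B * A = A * B) :
    ∃ lam : F, lam ^ n = 1 ∧ mat A = lam • (1 : Matrix (Fin n) (Fin n) F) := by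
  classical
  haveI : NeZero n := ⟨hn.ne'⟩
  obtain ⟨d, hd⟩ := Infinite.exists_notMem_finset ({0, 1, -1} : Finset F)
  simp only [Finset.mem_insert, Finset.mem_singleton, not_or] at hd
  obtain ⟨hd0, hd1, hdm⟩ := hd
  have hd2 : d * d ≠ 1 := fun hc => by
    rcases mul_self_eq_one_iff.mp hc with h1 | h1
    · exact hd1 h1
    · exact hdm h1
  have hoff : ∀ k l : Fin n, k ≠ l → mat A k l = 0 := by
    intro k l hkl
    rcases lt_or_gt_of_ne hkl with hlt | hgt
    swap
    · exact mat_tri A (show (id : Fin n → Fin n) l < id k from hgt)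
    set f : Fin n → F := fun i => if i = k then d else if i = l then d⁻¹ else 1 with hf
    have hdet : (Matrix.diagonal f).det = 1 := by
      rw [Matrix.det_diagonal,
        ← Finset.mul_prod_erase Finset.univ f (Finset.mem_univ k),
        ← Finset.mul_prod_erase _ f
          (Finset.mem_erase.mpr ⟨hkl.symm, Finset.mem_univ l⟩),
        Finset.prod_eq_one (fun i hi => by
          simp only [Finset.mem_erase] at hi
          simp [hf, hi.1, hi.2.1])]
      simp [hf, hkl.symm, mul_inv_cancel₀ hd0]
    set B : ↥(STP n F) :=
      ⟨⟨Matrix.diagonal f, hdet⟩, Matrix.blockTriangular_diagonal f⟩ with hB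
    have hc := congrArg mat (h B)
    rw [mat_mul, mat_mul] at hc
    have hmatB : mat B = Matrix.diagonal f := rfl
    have he : (mat B * mat A) k l = (mat A * mat B) k l := by rw [hc]
    rw [hmatB, Matrix.diagonal_mul, Matrix.mul_diagonal] at he
    have hfk : f k = d := by simp [hf]
    have hfl : f l = d⁻¹ := by simp [hf, hkl.symm]
    rw [hfk, hfl] at he
    have h4 : d * mat A k l * d = mat A k l * d⁻¹ * d := by rw [he]
    rw [mul_assoc (mat A k l), inv_mul_cancel₀ hd0, mul_one] at h4
    have h3 : (d * d - 1) * mat A k l = 0 := by linear_combination h4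
    rcases mul_eq_zero.mp h3 with h5 | h5
    · exact absurd (by linear_combination h5 : d * d = 1) hd2
    · exact h5
  have hdiag : ∀ i j : Fin n, i < j → mat A i i = mat A j j := by
    intro i j hij
    have hij' : i ≠ j := ne_of_lt hij
    have htri : (Matrix.transvection i j (1 : F)).BlockTriangular (id : Fin n → Fin n) := by
      intro a b hab
      have h1 : a ≠ b := fun hc => absurd hab (by rw [hc]; exact lt_irrefl _)
      have h2 : ¬(i = a ∧ j = b) := by
        rintro ⟨rfl, rfl⟩
        exact absurd hij (not_lt.mpr (le_of_lt hab))
      simp [Matrix.transvection, Matrix.single, Matrix.one_apply, h1, h2]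
    set B : ↥(STP n F) :=
      ⟨⟨Matrix.transvection i j 1, Matrix.det_transvection_of_ne i j hij' 1⟩, htri⟩ with hB
    have hc := congrArg mat (h B)
    rw [mat_mul, mat_mul] at hc
    have he : (mat B * mat A) i j = (mat A * mat B) i j := by rw [hc]
    have hBdef : mat B = 1 + Matrix.single i j (1 : F) := rfl
    rw [hBdef, Matrix.add_mul, Matrix.mul_add, Matrix.one_mul, Matrix.mul_one] at he
    simp only [Matrix.add_apply] at he
    rw [Matrix.single_mul_apply_same, Matrix.mul_single_apply_same]
      at he
    have := add_left_cancel he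
    rw [one_mul, mul_one] at this
    exact this.symm
  have hmat : mat A = mat A 0 0 • (1 : Matrix (Fin n) (Fin n) F) := by
    ext i j
    rcases eq_or_ne i j with rfl | hne
    · simp only [Matrix.smul_apply, Matrix.one_apply_eq, smul_eq_mul, mul_one]
      by_cases hi : i = 0
      · rw [hi]
      · exact (hdiag 0 i (lt_of_le_of_ne (Fin.zero_le i) (Ne.symm hi))).symm
    · rw [hoff i j hne]
      simp [Matrix.one_apply_ne hne]
  refine ⟨mat A 0 0, ?_, hmat⟩
  have hdet := mat_det A
  rw [hmat, Matrix.det_smul, Matrix.det_one, mul_one, Fintype.card_fin] at hdet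
  exact hdet

end STPaux

theorem stmt_0 (F : Type*) [Field F] [Infinite F] (n : ℕ) (hn : 0 < n) :
    (∀ A : STP n F, A ∈ Subgroup.center ↥(STP n F) ↔
        (A : Matrix.SpecialLinearGroup (Fin n) F) ∈
          Subgroup.center (Matrix.SpecialLinearGroup (Fin n) F)) ∧
    (∀ A : STP n F, A ∈ Subgroup.center ↥(STP n F) ↔
        ∃ lam : F, lam ^ n = 1 ∧
          ((A : Matrix.SpecialLinearGroup (Fin n) F) : Matrix (Fin n) (Fin n) F) =
            lam • (1 : Matrix (Fin n) (Fin n) F)) ∧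
    Subgroup.center (↥(STP n F) ⧸ Subgroup.center ↥(STP n F)) = ⊥ := by
  classical
  haveI : NeZero n := ⟨hn.ne'⟩
  have key : ∀ A : ↥(STP n F), A ∈ Subgroup.center ↥(STP n F) →
      ∃ lam : F, lam ^ n = 1 ∧ STPaux.mat A = lam • (1 : Matrix (Fin n) (Fin n) F) :=
    fun A hA => STPaux.central_scalar hn A (fun B => Subgroup.mem_center_iff.mp hA B)
  have back : ∀ A : ↥(STP n F),
      (∃ lam : F, lam ^ n = 1 ∧ STPaux.mat A = lam • (1 : Matrix (Fin n) (Fin n) F)) →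
      (A : Matrix.SpecialLinearGroup (Fin n) F) ∈
        Subgroup.center (Matrix.SpecialLinearGroup (Fin n) F) := by
    rintro A ⟨lam, -, hA⟩
    rw [Subgroup.mem_center_iff]
    intro g
    apply Subtype.ext
    show (g : Matrix (Fin n) (Fin n) F) * STPaux.mat A
        = STPaux.mat A * (g : Matrix (Fin n) (Fin n) F)
    rw [hA, Matrix.mul_smul, Matrix.smul_mul, Matrix.mul_one, Matrix.one_mul]
  have back2 : ∀ A : ↥(STP n F),
      (A : Matrix.SpecialLinearGroup (Fin n) F) ∈
        Subgroup.center (Matrix.SpecialLinearGroup (Fin n) F) →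
      A ∈ Subgroup.center ↥(STP n F) := by
    intro A hA
    rw [Subgroup.mem_center_iff]
    intro B
    apply Subtype.ext
    exact Subgroup.mem_center_iff.mp hA (B : Matrix.SpecialLinearGroup (Fin n) F)
  refine ⟨fun A => ⟨fun hA => back A (key A hA), back2 A⟩,
    fun A => ⟨key A, fun h => back2 A (back A h)⟩, ?_⟩
  rw [eq_bot_iff]
  intro x hx
  obtain ⟨A, rfl⟩ := QuotientGroup.mk_surjective x
  rw [Subgroup.mem_bot, QuotientGroup.eq_one_iff, Subgroup.mem_center_iff]
  intro B
  have hc := Subgroup.mem_center_iff.mp hx (QuotientGroup.mk B)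
  rw [← QuotientGroup.mk_mul, ← QuotientGroup.mk_mul, QuotientGroup.eq] at hc
  obtain ⟨lam, -, hscal⟩ := key _ hc
  have hc2 : (B * A)⁻¹ * (A * B) = A⁻¹ * (B⁻¹ * (A * B)) := by
    rw [_root_.mul_inv_rev, mul_assoc]
  have e1 : STPaux.mat ((B * A)⁻¹ * (A * B)) 0 0
      = STPaux.mat A⁻¹ 0 0 * (STPaux.mat B⁻¹ 0 0 * (STPaux.mat A 0 0 * STPaux.mat B 0 0)) := by
    rw [hc2, STPaux.mat_mul, STPaux.mat_mul, STPaux.mat_mul,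
      STPaux.diag_mul (STPaux.mat_tri A⁻¹)
        ((STPaux.mat_tri B⁻¹).mul ((STPaux.mat_tri A).mul (STPaux.mat_tri B))),
      STPaux.diag_mul (STPaux.mat_tri B⁻¹) ((STPaux.mat_tri A).mul (STPaux.mat_tri B)),
      STPaux.diag_mul (STPaux.mat_tri A) (STPaux.mat_tri B)]
  have h1 := STPaux.mat_diag_inv A 0
  have h2 := STPaux.mat_diag_inv B 0
  have e2 : STPaux.mat ((B * A)⁻¹ * (A * B)) 0 0 = lam := by
    rw [hscal]; simp
  have hlam : lam = 1 := by
    rw [e1] at e2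
    linear_combination -e2 + STPaux.mat B 0 0 * STPaux.mat B⁻¹ 0 0 * h1 + h2
  have hone : (B * A)⁻¹ * (A * B) = 1 := by
    apply STPaux.mat_inj
    rw [hscal, hlam, one_smul, STPaux.mat_one]
  exact inv_mul_eq_one.mp hone
end
end

section
/- Let F be a subfield of a field H and let n ≥ 3 be a natural number. If L is a normal subgroup of STP(n,H) whose intersection with UT(n,H) is non-trivial, then the intersection of L with UT(n,F) is also non-trivial. -/
noncomputable section

open Matrix

namespace Stmt1Aux
open Matrix
variable {n : ℕ} {H : Type*} [Field H]

def colMat (l : Fin n) (d : Fin n → H) : Matrix (Fin n) (Fin n) H :=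
  Matrix.of fun a b => if b = l then d a else 0

lemma colMat_mul_std {l z : Fin n} (hz : z ≠ l) (k : Fin n) (d : Fin n → H) (x : H) :
    colMat l d * single z k x = 0 := by
  ext a b
  rw [Matrix.mul_apply, Matrix.zero_apply]
  refine Finset.sum_eq_zero fun c _ => ?_
  by_cases hc : c = l
  · subst hc
    rw [single_apply_of_row_ne hz, mul_zero]
  · simp [colMat, hc]

lemma std_mul_colMat (z k l : Fin n) (x : H) (d : Fin n → H) :
    single z k x * colMat l d = single z l (x * d k) := by
  ext a b
  by_cases ha : a = z
  · subst ha
    rw [single_mul_apply_same]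
    by_cases hb : b = l
    · subst hb; simp [colMat]
    · simp [colMat, hb, Ne.symm hb]
  · rw [single_mul_apply_of_ne (h := ha),
      single_apply_of_row_ne (Ne.symm ha)]

lemma mul_std_eq_colMat (A : Matrix (Fin n) (Fin n) H) (j l : Fin n) (x : H) :
    A * single j l x = colMat l (fun a => A a j * x) := by
  ext a b
  by_cases hb : b = l
  · subst hb
    rw [mul_single_apply_same]
    simp [colMat]
  · rw [mul_single_apply_of_ne (hbj := hb)]
    simp [colMat, hb]

lemma std_mul_unitri {A : Matrix (Fin n) (Fin n) H} {l : Fin n}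
    (htri : A.BlockTriangular id) (hdiag : ∀ i, A i i = 1)
    (hl : ∀ b : Fin n, b ≠ l → b < l) (j : Fin n) (x : H) :
    single j l x * A = single j l x := by
  ext a b
  by_cases ha : a = j
  · subst ha
    rw [single_mul_apply_same]
    by_cases hb : b = l
    · subst hb; rw [hdiag, mul_one, single_apply_same]
    · rw [htri (hl b hb), mul_zero,
        single_apply_of_col_ne _ _ (Ne.symm hb)]
  · rw [single_mul_apply_of_ne (h := ha),
      single_apply_of_row_ne (Ne.symm ha)]

lemma step1_identity {A S : Matrix (Fin n) (Fin n) H} (hSA : S * A = S) (hSS : S * S = 0) :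
    (1 + (A - 1) * S) * ((1 + S) * A) = A * (1 + S) := by
  have h1 : (1 + S) * A = A + S := by rw [add_mul, one_mul, hSA]
  have h2 : (A - 1) * S * A = (A - 1) * S := by rw [mul_assoc, hSA]
  have h3 : (A - 1) * S * S = 0 := by rw [mul_assoc, hSS, mul_zero]
  calc (1 + (A - 1) * S) * ((1 + S) * A)
      = (1 + (A - 1) * S) * (A + S) := by rw [h1]
    _ = A + S + ((A - 1) * S * A + (A - 1) * S * S) := by noncomm_ring
    _ = A + S + ((A - 1) * S + 0) := by rw [h2, h3]
    _ = A * (1 + S) := by noncomm_ring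

lemma step2_identity {N T U : Matrix (Fin n) (Fin n) H} (hNT : N * T = 0) (hTN : T * N = U)
    (hUN : U * N = 0) (hUT : U * T = 0) :
    (1 + U) * ((1 + N) * (1 + T)) = (1 + T) * (1 + N) := by
  calc (1 + U) * ((1 + N) * (1 + T))
      = 1 + N + T + N * T + U + U * N + U * T + U * (N * T) := by noncomm_ring
    _ = 1 + N + T + 0 + U + 0 + 0 + U * 0 := by rw [hNT, hUN, hUT]
    _ = (1 + T) * (1 + N) := by rw [mul_zero, ← hTN]; noncomm_ring

lemma eq_of_mul_coe {M : Matrix (Fin n) (Fin n) H} {p q : Matrix.SpecialLinearGroup (Fin n) H}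
    (h : M * (q : Matrix (Fin n) (Fin n) H) = (p : Matrix (Fin n) (Fin n) H)) :
    ((p * q⁻¹ : Matrix.SpecialLinearGroup (Fin n) H) : Matrix (Fin n) (Fin n) H) = M := by
  have hq : (q : Matrix (Fin n) (Fin n) H) * ((q⁻¹ : Matrix.SpecialLinearGroup (Fin n) H) :
      Matrix (Fin n) (Fin n) H) = 1 := by
    rw [← Matrix.SpecialLinearGroup.coe_mul, mul_inv_cancel,
      Matrix.SpecialLinearGroup.coe_one]
  rw [Matrix.SpecialLinearGroup.coe_mul, ← h, mul_assoc, hq, mul_one]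

/-- The elementary unitriangular matrix as an element of `STP n H`. -/
def elem (i j : Fin n) (hij : i < j) (x : H) : STP n H :=
  ⟨⟨1 + single i j x, by
      have := Matrix.det_transvection_of_ne i j hij.ne x
      rwa [Matrix.transvection] at this⟩,
    Matrix.blockTriangular_one.add (Matrix.blockTriangular_single hij.le x)⟩

lemma elem_coe (i j : Fin n) (hij : i < j) (x : H) :
    (((elem i j hij x : STP n H) : Matrix.SpecialLinearGroup (Fin n) H) :
      Matrix (Fin n) (Fin n) H) = 1 + single i j x := rfl

end Stmt1Aux

open Stmt1Aux in
theorem stmt_1 (H : Type*) [Field H] (F : Subfield H) (n : ℕ) (hn : 3 ≤ n)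
    (L : Subgroup ↥(STP n H)) (hL : L.Normal)
    (hint : ∃ A : STP n H, A ∈ L ∧ A ≠ 1 ∧
      ∀ i : Fin n,
        ((A : Matrix.SpecialLinearGroup (Fin n) H) : Matrix (Fin n) (Fin n) H) i i = 1) :
    ∃ A : STP n H, A ∈ L ∧ A ≠ 1 ∧
      (∀ i : Fin n,
        ((A : Matrix.SpecialLinearGroup (Fin n) H) : Matrix (Fin n) (Fin n) H) i i = 1) ∧
      ∀ i j : Fin n,
        ((A : Matrix.SpecialLinearGroup (Fin n) H) : Matrix (Fin n) (Fin n) H) i j ∈ F := by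
  classical
  obtain ⟨g, hgL, hg1, hgdiag⟩ := hint
  set A : Matrix (Fin n) (Fin n) H :=
    ((g : Matrix.SpecialLinearGroup (Fin n) H) : Matrix (Fin n) (Fin n) H) with hA
  have htri : A.BlockTriangular id := g.2
  set l : Fin n := ⟨n - 1, by omega⟩ with hldef
  set z : Fin n := ⟨0, by omega⟩ with hzdef
  have hzl : z ≠ l := by simp only [hzdef, hldef, ne_eq, Fin.mk.injEq]; omega
  have hlt : ∀ b : Fin n, b ≠ l → b < l := by
    intro b hb
    have hb2 := b.isLt
    have : (b : ℕ) ≠ n - 1 := fun h => hb (Fin.ext h)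
    rw [Fin.lt_iff_val_lt_val]
    simp only [hldef]
    omega
  have key : ∀ u : ↥(STP n H),
      ((u : Matrix.SpecialLinearGroup (Fin n) H) : Matrix (Fin n) (Fin n) H) = 1 → u = 1 := by
    intro u hu
    apply Subtype.ext
    apply Subtype.ext
    simpa using hu
  -- the common final step
  have final : ∀ P : ↥(STP n H), P ∈ L →
      ((P : Matrix.SpecialLinearGroup (Fin n) H) : Matrix (Fin n) (Fin n) H)
        = 1 + Matrix.single z l 1 →
      ∃ A : STP n H, A ∈ L ∧ A ≠ 1 ∧
        (∀ i : Fin n,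
          ((A : Matrix.SpecialLinearGroup (Fin n) H) : Matrix (Fin n) (Fin n) H) i i = 1) ∧
        ∀ i j : Fin n,
          ((A : Matrix.SpecialLinearGroup (Fin n) H) : Matrix (Fin n) (Fin n) H) i j ∈ F := by
    intro P hPL hPcoe
    refine ⟨P, hPL, ?_, ?_, ?_⟩
    · intro h1
      have h2 : ((P : Matrix.SpecialLinearGroup (Fin n) H) : Matrix (Fin n) (Fin n) H) = 1 := by
        rw [h1]; simp
      rw [hPcoe] at h2
      have h3 := congrFun (congrFun h2 z) l
      rw [Matrix.add_apply, Matrix.single_apply_same, Matrix.one_apply_ne hzl,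
        zero_add] at h3
      exact one_ne_zero h3
    · intro i
      rw [hPcoe, Matrix.add_apply, Matrix.one_apply_eq,
        Matrix.single_apply_of_ne (h := fun hh => hzl (hh.1.trans hh.2.symm)),
        add_zero]
    · intro a b
      rw [hPcoe, Matrix.add_apply]
      refine add_mem ?_ ?_
      · by_cases h : a = b
        · rw [h, Matrix.one_apply_eq]; exact one_mem F
        · rw [Matrix.one_apply_ne h]; exact zero_mem F
      · by_cases h : z = a ∧ l = b
        · obtain ⟨rfl, rfl⟩ := h
          rw [Matrix.single_apply_same]; exact one_mem F
        · rw [Matrix.single_apply_of_ne (h := h)]; exact zero_mem F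
  -- there is a nonzero strictly-upper entry
  have hA1 : A ≠ 1 := fun h => hg1 (key g h)
  have hex : ∃ i j : Fin n, i < j ∧ A i j ≠ 0 := by
    by_contra hc
    push_neg at hc
    apply hA1
    ext i j
    rcases lt_trichotomy i j with h | h | h
    · rw [hc i j h, Matrix.one_apply_ne h.ne]
    · subst h; rw [hgdiag, Matrix.one_apply_eq]
    · rw [htri h, Matrix.one_apply_ne h.ne']
  -- Stage B : an element of L of the form 1 + colMat l d
  have stageB : ∃ (b : ↥(STP n H)) (d : Fin n → H), b ∈ L ∧
      ((b : Matrix.SpecialLinearGroup (Fin n) H) : Matrix (Fin n) (Fin n) H)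
        = 1 + colMat l d ∧ d l = 0 ∧ ∃ i, d i ≠ 0 := by
    by_cases hcase : ∃ i j : Fin n, i < j ∧ j ≠ l ∧ A i j ≠ 0
    · obtain ⟨i, j, hij, hjl, hAij⟩ := hcase
      have hjl' : j < l := hlt j hjl
      set S : Matrix (Fin n) (Fin n) H := Matrix.single j l (1 : H) with hS
      set e : ↥(STP n H) := elem j l hjl' 1 with he
      have hSA : S * A = S := std_mul_unitri htri hgdiag hlt j 1
      have hSS : S * S = 0 := Matrix.single_mul_single_of_ne _ _ _ _ hjl'.ne' 1
      refine ⟨g * e * (e * g)⁻¹, fun a => (A - 1) a j * 1, ?_, ?_, ?_, ⟨i, ?_⟩⟩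
      · have hbeq : g * e * (e * g)⁻¹ = g * (e * g⁻¹ * e⁻¹) := by group
        rw [hbeq]
        exact mul_mem hgL (hL.conj_mem _ (inv_mem hgL) e)
      · rw [← mul_std_eq_colMat]
        have hco : ((g * e * (e * g)⁻¹ : ↥(STP n H)) : Matrix.SpecialLinearGroup (Fin n) H)
            = ((g : Matrix.SpecialLinearGroup (Fin n) H)
                * (e : Matrix.SpecialLinearGroup (Fin n) H))
              * ((e : Matrix.SpecialLinearGroup (Fin n) H)
                * (g : Matrix.SpecialLinearGroup (Fin n) H))⁻¹ := by
          push_cast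
          rfl
        rw [hco, eq_of_mul_coe (M := 1 + (A - 1) * S) ?_]
        rw [Matrix.SpecialLinearGroup.coe_mul, Matrix.SpecialLinearGroup.coe_mul]
        show (1 + (A - 1) * S) * ((1 + S) * A) = A * (1 + S)
        exact step1_identity hSA hSS
      · show (A - 1) l j * 1 = 0
        rw [Matrix.sub_apply, htri hjl', Matrix.one_apply_ne hjl'.ne', sub_zero, zero_mul]
      · show (A - 1) i j * 1 ≠ 0
        rw [Matrix.sub_apply, Matrix.one_apply_ne hij.ne, sub_zero, mul_one]
        exact hAij
    · push_neg at hcase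
      obtain ⟨i, j, hij, hAij⟩ := hex
      have hjl : j = l := by
        by_contra hh
        exact hAij (hcase i j hij hh)
      subst hjl
      refine ⟨g, fun a => if a = l then 0 else A a l, hgL, ?_, by simp, ⟨i, ?_⟩⟩
      · ext a b
        show A a b = _
        rw [Matrix.add_apply]
        by_cases hb : b = l
        · subst hb
          by_cases ha : a = l
          · subst ha
            simp [colMat, hgdiag]
          · simp [colMat, ha, Matrix.one_apply_ne ha]
        · have h0 : colMat l (fun a => if a = l then 0 else A a l) a b = 0 := by
            simp [colMat, hb]
          rw [h0, add_zero]
          rcases lt_trichotomy a b with h | h | h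
          · rw [hcase a b h hb, Matrix.one_apply_ne h.ne]
          · subst h; rw [hgdiag, Matrix.one_apply_eq]
          · rw [htri h, Matrix.one_apply_ne h.ne']
      · show (if i = l then 0 else A i l) ≠ 0
        rw [if_neg hij.ne]
        exact hAij
  obtain ⟨b, d, hbL, hbcoe, hdl, i0, hi0⟩ := stageB
  by_cases hcase2 : ∃ k, k ≠ z ∧ d k ≠ 0
  · -- commutator with an elementary matrix
    obtain ⟨k, hkz, hk0⟩ := hcase2
    have hzk : z < k := by
      rw [Fin.lt_iff_val_lt_val]
      have : (k : ℕ) ≠ 0 := fun h => hkz (Fin.ext (by simp [hzdef, h]))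
      simp only [hzdef]
      omega
    set x : H := (d k)⁻¹ with hx
    set T : Matrix (Fin n) (Fin n) H := Matrix.single z k x with hT
    set N : Matrix (Fin n) (Fin n) H := colMat l d with hN
    set U : Matrix (Fin n) (Fin n) H := Matrix.single z l (1 : H) with hU
    have hNT : N * T = 0 := colMat_mul_std hzl k d x
    have hTN : T * N = U := by rw [hT, hN, std_mul_colMat, hx, inv_mul_cancel₀ hk0]
    have hUN : U * N = 0 := by
      rw [hU, hN, std_mul_colMat, hdl, mul_zero, Matrix.single_zero]
    have hUT : U * T = 0 := Matrix.single_mul_single_of_ne _ _ _ _ (Ne.symm hzl) x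
    set t : ↥(STP n H) := elem z k hzk x with ht
    apply final (t * b * (b * t)⁻¹)
    · have hbeq : t * b * (b * t)⁻¹ = (t * b * t⁻¹) * b⁻¹ := by group
      rw [hbeq]
      exact mul_mem (hL.conj_mem b hbL t) (inv_mem hbL)
    · have hco : ((t * b * (b * t)⁻¹ : ↥(STP n H)) : Matrix.SpecialLinearGroup (Fin n) H)
          = ((t : Matrix.SpecialLinearGroup (Fin n) H)
              * (b : Matrix.SpecialLinearGroup (Fin n) H))
            * ((b : Matrix.SpecialLinearGroup (Fin n) H)
              * (t : Matrix.SpecialLinearGroup (Fin n) H))⁻¹ := by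
        push_cast
        rfl
      rw [hco, eq_of_mul_coe (M := 1 + U) ?_]
      rw [Matrix.SpecialLinearGroup.coe_mul, Matrix.SpecialLinearGroup.coe_mul, hbcoe]
      show (1 + U) * ((1 + N) * (1 + T)) = (1 + T) * (1 + N)
      exact step2_identity hNT hTN hUN hUT
  · -- conjugation by a diagonal matrix
    push_neg at hcase2
    have hdz : d z ≠ 0 := by
      rcases eq_or_ne i0 z with rfl | h
      · exact hi0
      · exact absurd (hcase2 i0 h) hi0
    have hcol : colMat l d = Matrix.single z l (d z) := by
      ext a b
      by_cases hb : b = l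
      · subst hb
        by_cases ha : a = z
        · subst ha; simp [colMat]
        · rw [Matrix.single_apply_of_row_ne (fun h => ha h.symm)]
          simp [colMat, hcase2 a ha]
      · rw [Matrix.single_apply_of_col_ne _ _ (fun h => hb h.symm)]
        simp [colMat, hb]
    set o : Fin n := ⟨1, by omega⟩ with hodef
    have hoz : o ≠ z := by simp [hodef, hzdef, Fin.ext_iff]
    have hlz : l ≠ z := Ne.symm hzl
    have hlo : l ≠ o := by simp only [hldef, hodef, ne_eq, Fin.mk.injEq]; omega
    set v : Fin n → H := fun a => if a = z then (d z)⁻¹ else if a = o then d z else 1 with hv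
    have hv0 : ∀ a, v a ≠ 0 := by
      intro a
      rw [hv]
      dsimp only
      split_ifs
      · exact inv_ne_zero hdz
      · exact hdz
      · exact one_ne_zero
    have hvz : v z = (d z)⁻¹ := if_pos rfl
    have hvo : v o = d z := by rw [hv]; dsimp only; rw [if_neg hoz, if_pos rfl]
    have hvl : v l = 1 := by rw [hv]; dsimp only; rw [if_neg hlz, if_neg hlo]
    have hrest : ∏ a ∈ (Finset.univ.erase z).erase o, v a = 1 :=
      Finset.prod_eq_one (fun a ha => by
        rw [Finset.mem_erase, Finset.mem_erase] at ha
        rw [hv]; dsimp only; rw [if_neg ha.2.1, if_neg ha.1])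
    have hprod : ∏ a, v a = 1 := by
      rw [← Finset.mul_prod_erase Finset.univ v (Finset.mem_univ z),
        ← Finset.mul_prod_erase _ v (Finset.mem_erase.mpr ⟨hoz, Finset.mem_univ o⟩),
        hrest, mul_one, hvz, hvo, inv_mul_cancel₀ hdz]
    set dd : ↥(STP n H) := ⟨⟨Matrix.diagonal v, by rw [Matrix.det_diagonal]; exact hprod⟩,
      Matrix.blockTriangular_diagonal v⟩ with hdd
    set dd' : ↥(STP n H) := ⟨⟨Matrix.diagonal (fun a => (v a)⁻¹), by
        rw [Matrix.det_diagonal, Finset.prod_inv_distrib, hprod, inv_one]⟩,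
      Matrix.blockTriangular_diagonal _⟩ with hdd'
    have hdiaginv : Matrix.diagonal v * Matrix.diagonal (fun a => (v a)⁻¹) = 1 := by
      rw [Matrix.diagonal_mul_diagonal]
      have hfun : (fun i => v i * (v i)⁻¹) = fun _ => (1 : H) :=
        funext fun a => mul_inv_cancel₀ (hv0 a)
      rw [hfun, Matrix.diagonal_one]
    have hddmul : dd * dd' = 1 := by
      apply Subtype.ext
      apply Subtype.ext
      show Matrix.diagonal v * Matrix.diagonal (fun a => (v a)⁻¹) = _
      rw [hdiaginv]
      simp
    have hddinv : dd⁻¹ = dd' := inv_eq_of_mul_eq_one_right hddmul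
    apply final (dd * b * dd⁻¹)
    · exact hL.conj_mem b hbL dd
    · have hco : ((dd * b * dd⁻¹ : ↥(STP n H)) : Matrix.SpecialLinearGroup (Fin n) H)
          = (dd : Matrix.SpecialLinearGroup (Fin n) H)
            * (b : Matrix.SpecialLinearGroup (Fin n) H)
            * (dd' : Matrix.SpecialLinearGroup (Fin n) H) := by
        rw [hddinv]
        push_cast
        rfl
      rw [hco, Matrix.SpecialLinearGroup.coe_mul, Matrix.SpecialLinearGroup.coe_mul]
      have h1 : ((dd : Matrix.SpecialLinearGroup (Fin n) H) : Matrix (Fin n) (Fin n) H)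
          = Matrix.diagonal v := rfl
      have h2 : ((dd' : Matrix.SpecialLinearGroup (Fin n) H) : Matrix (Fin n) (Fin n) H)
          = Matrix.diagonal (fun a => (v a)⁻¹) := rfl
      rw [h1, h2, hbcoe, hcol]
      -- conjugation computation
      rw [mul_add, mul_one, add_mul, hdiaginv]
      congr 1
      ext a c
      rw [Matrix.mul_diagonal, Matrix.diagonal_mul]
      by_cases h : z = a ∧ l = c
      · obtain ⟨rfl, rfl⟩ := h
        rw [Matrix.single_apply_same, Matrix.single_apply_same,
          hvz, hvl, inv_one, mul_one, inv_mul_cancel₀ hdz]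
      · rw [Matrix.single_apply_of_ne (h := h), Matrix.single_apply_of_ne (h := h),
          mul_zero, zero_mul]
end
end
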